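/- Let f ∈ BV(ℝ), x ∈ ℝ, and suppose M̃f(x) > |f|‾(x) and M̃f(x) > lim_{y→∞} M̃f(y). Then there exists a bounded closed interval [a,b] ∋ x with a < b such that (1/(b−a))∫_a^b |f| = M̃f(x); moreover either (1/(x−a))∫_a^x |f| = M̃f(x) or (1/(b−x))∫_x^b |f| = M̃f(x) (here if a = x or b = x, interpret the corresponding degenerate option as not occurring). -/

import Mathlib

open MeasureTheory Filter Set Topology

/-- Average of |f| over the interval (a,b). -/
noncomputable def mAvg (f : ℝ → ℝ) (a b : ℝ) : ℝ := (∫ t in a..b, |f t|) / (b - a)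

/-- Uncentered Hardy–Littlewood maximal function. -/
noncomputable def uMax (f : ℝ → ℝ) (x : ℝ) : ℝ :=
  sSup {y | ∃ a b : ℝ, a < b ∧ a ≤ x ∧ x ≤ b ∧ y = mAvg f a b}

/-- f has bounded variation on ℝ. -/
def BVfun (f : ℝ → ℝ) : Prop := BoundedVariationOn f Set.univ

/-- Total variation of f over a set, as a real number. -/
noncomputable def varOn (f : ℝ → ℝ) (s : Set ℝ) : ℝ := (eVariationOn f s).toReal

/-- BV norm: |f(-∞)| + Var(f). -/
noncomputable def bvNorm (f : ℝ → ℝ) : ℝ :=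
  |limUnder Filter.atBot f| + varOn f Set.univ

/-- Upper precise representative: limsup over intervals I ∋ x with |I| → 0 of averages of |f|. -/
noncomputable def ubar (f : ℝ → ℝ) (x : ℝ) : ℝ :=
  ⨅ h : {h : ℝ // 0 < h},
    sSup {y | ∃ a b : ℝ, a < b ∧ a ≤ x ∧ x ≤ b ∧ b - a ≤ h.1 ∧ y = mAvg f a b}

/-- The open "interval" (a,b) in ℝ with extended-real endpoints. -/
noncomputable def erealIoo (a b : EReal) : Set ℝ := {x : ℝ | a < (x : EReal) ∧ (x : EReal) < b}

/-- Value of g at an extended-real point, understood as a limit at ±∞. -/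
noncomputable def valAt (g : ℝ → ℝ) (a : EReal) : ℝ :=
  if a = ⊥ then limUnder Filter.atBot g
  else if a = ⊤ then limUnder Filter.atTop g
  else g a.toReal

lemma bv_meas {f : ℝ → ℝ} (hf : BVfun f) : Measurable f := by
  obtain ⟨p, q, hp, hq, hpq⟩ :=
    hf.locallyBoundedVariationOn.exists_monotoneOn_sub_monotoneOn
  rw [monotoneOn_univ] at hp hq
  rw [hpq]
  exact hp.measurable.sub hq.measurable

lemma bv_bdd {f : ℝ → ℝ} (hf : BVfun f) : ∃ C : ℝ, 0 ≤ C ∧ ∀ t, |f t| ≤ C := by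
  refine ⟨|f 0| + (eVariationOn f univ).toReal, by positivity, fun t => ?_⟩
  have h1 : dist (f t) (f 0) ≤ (eVariationOn f univ).toReal := by
    rw [dist_edist]
    exact ENNReal.toReal_mono hf (eVariationOn.edist_le f (mem_univ t) (mem_univ 0))
  rw [Real.dist_eq] at h1
  calc |f t| = |f 0 + (f t - f 0)| := by ring_nf
    _ ≤ |f 0| + |f t - f 0| := abs_add_le _ _
    _ ≤ |f 0| + (eVariationOn f univ).toReal := by linarith

lemma bv_tendsto_atBot {f : ℝ → ℝ} (hf : BVfun f) : ∃ l : ℝ, Tendsto f atBot (𝓝 l) := by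
  have hlbv := hf.locallyBoundedVariationOn
  obtain ⟨C, hC0, hC⟩ := bv_bdd hf
  set V := (eVariationOn f univ).toReal with hV
  set p := variationOnFromTo f univ 0 with hp
  have hpmono : Monotone p := monotoneOn_univ.1 (variationOnFromTo.monotoneOn hlbv (mem_univ 0))
  have hpbd : ∀ t, |p t| ≤ V := by
    intro t
    rcases le_total 0 t with h | h
    · rw [hp, variationOnFromTo.eq_of_le f univ h, abs_of_nonneg ENNReal.toReal_nonneg]
      exact ENNReal.toReal_mono hf (eVariationOn.mono f inter_subset_left)
    · rw [hp, variationOnFromTo.eq_of_ge f univ h, abs_neg, abs_of_nonneg ENNReal.toReal_nonneg]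
      exact ENNReal.toReal_mono hf (eVariationOn.mono f inter_subset_left)
  have hqmono : Monotone (p - f) :=
    monotoneOn_univ.1 (variationOnFromTo.sub_self_monotoneOn hlbv (mem_univ 0))
  have h1 : Tendsto p atBot (𝓝 (⨅ t, p t)) := by
    apply tendsto_atBot_ciInf hpmono
    refine ⟨-V, ?_⟩
    rintro y ⟨t, rfl⟩
    exact neg_le_of_abs_le (hpbd t)
  have h2 : Tendsto (p - f) atBot (𝓝 (⨅ t, (p - f) t)) := by
    apply tendsto_atBot_ciInf hqmono
    refine ⟨-(V + C), ?_⟩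
    rintro y ⟨t, rfl⟩
    have := hpbd t
    have := hC t
    simp only [Pi.sub_apply]
    have h3 := abs_le.1 (hpbd t)
    have h4 := abs_le.1 (hC t)
    linarith [h3.1, h4.2]
  refine ⟨(⨅ t, p t) - (⨅ t, (p - f) t), ?_⟩
  have h3 := h1.sub h2
  have : (fun t => p t - (p - f) t) = f := by funext t; simp
  rwa [this] at h3

lemma intInt {g : ℝ → ℝ} (hmeas : Measurable g) {C : ℝ} (hC : ∀ t, |g t| ≤ C) :
    ∀ a b : ℝ, IntervalIntegrable g volume a b := by
  intro a b
  rw [intervalIntegrable_iff]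
  refine Integrable.mono' (g := fun _ => C) (integrableOn_const measure_Ioc_lt_top.ne)
    hmeas.aestronglyMeasurable (ae_of_all _ fun t => ?_)
  simpa [Real.norm_eq_abs] using hC t

lemma cesaro {g : ℝ → ℝ} (hmeas : Measurable g) {C : ℝ} (hC : ∀ t, |g t| ≤ C)
    {l : ℝ} (hl : Tendsto g atBot (𝓝 l)) (R0 R : ℝ) (hR : R0 ≤ R) {ε : ℝ} (hε : 0 < ε) :
    ∃ M : ℝ, -M < R0 ∧ ∀ a b : ℝ, a ≤ -M → R0 ≤ b → b ≤ R →
      |(∫ t in a..b, g t) / (b - a) - l| ≤ ε := by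
  have hint : ∀ a b : ℝ, IntervalIntegrable g volume a b := intInt hmeas hC
  have hC0 : 0 ≤ C := (abs_nonneg _).trans (hC 0)
  have h1 := Metric.tendsto_nhds.mp hl (ε / 2) (half_pos hε)
  rw [eventually_atBot] at h1
  obtain ⟨M₁, hM₁⟩ := h1
  set M₀ : ℝ := max (-M₁) (1 - R0) with hM₀
  have hM₀R0 : -M₀ < R0 := by
    have : 1 - R0 ≤ M₀ := le_max_right _ _
    linarith
  have htail : ∀ t : ℝ, t ≤ -M₀ → |g t - l| ≤ ε / 2 := by
    intro t ht
    have h2 : t ≤ M₁ := by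
      have : -M₁ ≤ M₀ := le_max_left _ _
      linarith
    have := hM₁ t h2
    rw [Real.dist_eq] at this
    linarith
  set K : ℝ := (C + |l|) * (R + M₀) with hK
  have hKnn : 0 ≤ K := by
    apply mul_nonneg (by positivity)
    linarith
  refine ⟨max M₀ (2 * K / ε - R0 + 1), ?_, ?_⟩
  · have h2 : 0 ≤ 2 * K / ε := by positivity
    have h3 : 2 * K / ε - R0 + 1 ≤ max M₀ (2 * K / ε - R0 + 1) := le_max_right _ _
    linarith
  intro a b ha hb hbR
  have haM₀ : a ≤ -M₀ := by
    have : M₀ ≤ max M₀ (2 * K / ε - R0 + 1) := le_max_left _ _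
    linarith
  have hab : a < b := by linarith
  have hba0 : 0 < b - a := by linarith
  have hba : 2 * K / ε + 1 ≤ b - a := by
    have : 2 * K / ε - R0 + 1 ≤ max M₀ (2 * K / ε - R0 + 1) := le_max_right _ _
    linarith
  have hintsub : ∀ u v : ℝ, IntervalIntegrable (fun t => g t - l) volume u v := fun u v =>
    (hint u v).sub intervalIntegrable_const
  have key : (∫ t in a..b, g t) / (b - a) - l = (∫ t in a..b, (g t - l)) / (b - a) := by
    rw [intervalIntegral.integral_sub (hint a b) intervalIntegrable_const,
      intervalIntegral.integral_const, smul_eq_mul]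
    field_simp
  rw [key, abs_div, abs_of_pos hba0, div_le_iff₀ hba0]
  have hsplit := intervalIntegral.integral_add_adjacent_intervals
    (hintsub a (-M₀)) (hintsub (-M₀) b)
  have e1 : ‖∫ t in a..(-M₀), (g t - l)‖ ≤ (ε / 2) * |(-M₀) - a| := by
    apply intervalIntegral.norm_integral_le_of_norm_le_const
    intro t ht
    rw [uIoc_of_le haM₀] at ht
    rw [Real.norm_eq_abs]
    exact htail t ht.2
  have e2 : ‖∫ t in (-M₀)..b, (g t - l)‖ ≤ (C + |l|) * |b - (-M₀)| := by
    apply intervalIntegral.norm_integral_le_of_norm_le_const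
    intro t _
    rw [Real.norm_eq_abs]
    calc |g t - l| ≤ |g t| + |l| := abs_sub _ _
      _ ≤ C + |l| := by linarith [hC t]
  rw [abs_of_nonneg (by linarith : (0:ℝ) ≤ -M₀ - a)] at e1
  rw [abs_of_nonneg (by linarith : (0:ℝ) ≤ b - (-M₀))] at e2
  have e3 : (C + |l|) * (b - (-M₀)) ≤ K := by
    rw [hK]
    apply mul_le_mul_of_nonneg_left _ (by positivity)
    linarith
  have e4 : |∫ t in a..b, (g t - l)| ≤ ε / 2 * (-M₀ - a) + K := by
    rw [← hsplit]
    calc |(∫ t in a..(-M₀), (g t - l)) + ∫ t in (-M₀)..b, (g t - l)|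
        ≤ |∫ t in a..(-M₀), (g t - l)| + |∫ t in (-M₀)..b, (g t - l)| := abs_add_le _ _
      _ ≤ ε / 2 * (-M₀ - a) + K := by
          rw [Real.norm_eq_abs] at e1 e2
          linarith
  have e5 : ε / 2 * (-M₀ - a) ≤ ε / 2 * (b - a) := by
    apply mul_le_mul_of_nonneg_left _ (by positivity)
    linarith
  have e6 : K ≤ ε / 2 * (b - a) := by
    have h7 : ε / 2 * (2 * K / ε + 1) ≤ ε / 2 * (b - a) :=
      mul_le_mul_of_nonneg_left hba (by positivity)
    have h8 : ε / 2 * (2 * K / ε + 1) = K + ε / 2 := by field_simp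
    linarith
  calc |∫ t in a..b, (g t - l)| ≤ ε / 2 * (-M₀ - a) + K := e4
    _ ≤ ε / 2 * (b - a) + ε / 2 * (b - a) := by linarith
    _ = ε * (b - a) := by ring

theorem stmt14 (f : ℝ → ℝ) (hf : BVfun f) (x : ℝ)
    (L : ℝ) (hL : Tendsto (uMax f) atTop (𝓝 L))
    (h1 : ubar f x < uMax f x) (h2 : L < uMax f x) :
    ∃ a b : ℝ, a ≤ x ∧ x ≤ b ∧ a < b ∧ mAvg f a b = uMax f x ∧
      ((a < x ∧ mAvg f a x = uMax f x) ∨ (x < b ∧ mAvg f x b = uMax f x)) := by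
  obtain ⟨C, hC0, hC⟩ := bv_bdd hf
  have hmeas := bv_meas hf
  have hgmeas : Measurable (fun t => |f t|) := hmeas.abs
  have hgC : ∀ t, |(fun t => |f t|) t| ≤ C := fun t => by
    simpa [abs_abs] using hC t
  have hint : ∀ a b : ℝ, IntervalIntegrable (fun t => |f t|) volume a b := intInt hgmeas hgC
  obtain ⟨lf, hlf⟩ := bv_tendsto_atBot hf
  have hl : Tendsto (fun t => |f t|) atBot (𝓝 |lf|) := hlf.abs
  set l : ℝ := |lf| with hldef
  set S : ℝ := uMax f x with hS
  set m : ℝ := max (ubar f x) L with hm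
  set ε : ℝ := (S - m) / 2 with hε
  have hmS : m < S := max_lt h1 h2
  have hεpos : 0 < ε := by rw [hε]; linarith
  -- averages bounded
  have havgle : ∀ a b : ℝ, a < b → mAvg f a b ≤ C := by
    intro a b hab
    rw [mAvg, div_le_iff₀ (by linarith)]
    calc (∫ t in a..b, |f t|) ≤ ‖∫ t in a..b, |f t|‖ := le_abs_self _
      _ ≤ C * |b - a| := intervalIntegral.norm_integral_le_of_norm_le_const
          (fun t _ => by simpa [Real.norm_eq_abs, abs_abs] using hC t)
      _ = C * (b - a) := by rw [abs_of_pos (by linarith)]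
  have hbdd : ∀ y : ℝ, BddAbove {z | ∃ a b : ℝ, a < b ∧ a ≤ y ∧ y ≤ b ∧ z = mAvg f a b} := by
    intro y
    refine ⟨C, ?_⟩
    rintro z ⟨a, b, hab, _, _, rfl⟩
    exact havgle a b hab
  have havg_uMax : ∀ y a b : ℝ, a < b → a ≤ y → y ≤ b → mAvg f a b ≤ uMax f y :=
    fun y a b hab hya hyb => le_csSup (hbdd y) ⟨a, b, hab, hya, hyb, rfl⟩
  -- l ≤ L
  have hlL : l ≤ L := by
    have huy : ∀ y : ℝ, l ≤ uMax f y := by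
      intro y
      by_contra hcon
      push_neg at hcon
      obtain ⟨M, hM1, hM2⟩ := cesaro hgmeas hgC hl y y le_rfl
        (show (0:ℝ) < (l - uMax f y) / 2 by linarith)
      have h3 := hM2 (-M) y le_rfl le_rfl le_rfl
      have h4 : mAvg f (-M) y ≤ uMax f y := havg_uMax y (-M) y hM1 hM1.le le_rfl
      have h5 : mAvg f (-M) y = (∫ t in (-M)..y, |f t|) / (y - (-M)) := rfl
      have h6 := (abs_le.mp h3).1
      rw [← h5] at h6
      linarith
    exact ge_of_tendsto' hL huy
  -- escape bound: small intervals
  have E1 : ∃ δ > 0, ∀ a b : ℝ, a < b → a ≤ x → x ≤ b → b - a ≤ δ → mAvg f a b ≤ S - ε := by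
    have hub : ubar f x < S - ε := by
      have h3 : ubar f x ≤ m := le_max_left _ _
      rw [hε]; linarith
    haveI : Nonempty {h : ℝ // 0 < h} := ⟨⟨1, one_pos⟩⟩
    unfold ubar at hub
    obtain ⟨⟨δ, hδ⟩, hsup⟩ := exists_lt_of_ciInf_lt hub
    refine ⟨δ, hδ, fun a b hab hax hxb hlen => ?_⟩
    have hbd : BddAbove {y | ∃ a b : ℝ, a < b ∧ a ≤ x ∧ x ≤ b ∧ b - a ≤ δ ∧ y = mAvg f a b} := by
      refine ⟨C, ?_⟩
      rintro z ⟨a', b', h1', _, _, _, rfl⟩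
      exact havgle a' b' h1'
    have hmem : mAvg f a b ∈ {y | ∃ a b : ℝ, a < b ∧ a ≤ x ∧ x ≤ b ∧ b - a ≤ δ ∧ y = mAvg f a b} :=
      ⟨a, b, hab, hax, hxb, hlen, rfl⟩
    exact le_trans (le_csSup hbd hmem) hsup.le
  obtain ⟨δ, hδpos, hE1⟩ := E1
  -- escape bound: b large
  have hLS : L < S - ε := by
    have h3 : L ≤ m := le_max_right _ _
    rw [hε]; linarith
  have E2 : ∃ R₁, x < R₁ ∧ ∀ a b : ℝ, a < b → a ≤ x → x ≤ b → R₁ ≤ b →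
      mAvg f a b ≤ S - ε := by
    have hev : ∀ᶠ y in atTop, uMax f y ≤ S - ε := hL.eventually (eventually_le_nhds hLS)
    rw [eventually_atTop] at hev
    obtain ⟨N, hN⟩ := hev
    refine ⟨max N (x + 1), lt_of_lt_of_le (by linarith) (le_max_right _ _),
      fun a b hab hax hxb hRb => ?_⟩
    exact le_trans (havg_uMax b a b hab hab.le le_rfl)
      (hN b (le_trans (le_max_left _ _) hRb))
  obtain ⟨R₁, hR₁x, hE2⟩ := E2
  -- escape bound: a very negative
  obtain ⟨M, hMx, hM⟩ := cesaro hgmeas hgC hl x R₁ hR₁x.le hεpos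
  have hE3 : ∀ a b : ℝ, a ≤ -M → x ≤ b → b ≤ R₁ → mAvg f a b ≤ S - ε := by
    intro a b ha hxb hbR
    have h3 := (abs_le.mp (hM a b ha hxb hbR)).2
    have h5 : mAvg f a b = (∫ t in a..b, |f t|) / (b - a) := rfl
    rw [← h5] at h3
    have h6 : m = S - 2 * ε := by rw [hε]; ring
    have h7 : L ≤ m := le_max_right _ _
    linarith
  -- the set of averages
  set A : Set ℝ := {z | ∃ a b : ℝ, a < b ∧ a ≤ x ∧ x ≤ b ∧ z = mAvg f a b} with hA
  have hSA : S = sSup A := rfl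
  have hAne : A.Nonempty :=
    ⟨mAvg f (x - 1) (x + 1), x - 1, x + 1, by linarith, by linarith, by linarith, rfl⟩
  have hAbdd : BddAbove A := hbdd x
  -- membership in the compact set
  set K : Set (ℝ × ℝ) := (Icc (-M) x ×ˢ Icc x R₁) ∩ {p | δ ≤ p.2 - p.1} with hKdef
  have hKmem : ∀ a b : ℝ, a < b → a ≤ x → x ≤ b → S - ε < mAvg f a b → (a, b) ∈ K := by
    intro a b hab hax hxb hgt
    have hbR : b ≤ R₁ := by
      by_contra h
      push_neg at h
      exact absurd (hE2 a b hab hax hxb h.le) (not_le.2 hgt)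
    have haM : -M ≤ a := by
      by_contra h
      push_neg at h
      exact absurd (hE3 a b h.le hxb hbR) (not_le.2 hgt)
    have hlen : δ ≤ b - a := by
      by_contra h
      push_neg at h
      exact absurd (hE1 a b hab hax hxb h.le) (not_le.2 hgt)
    exact ⟨⟨⟨haM, hax⟩, hxb, hbR⟩, hlen⟩
  have hex : ∃ z ∈ A, S - ε < z :=
    exists_lt_of_lt_csSup hAne (by rw [← hSA]; linarith)
  obtain ⟨z, hzA, hzgt⟩ := hex
  rw [hA, mem_setOf_eq] at hzA
  obtain ⟨a₁, b₁, hab₁, hax₁, hxb₁, rfl⟩ := hzA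
  have hKne : K.Nonempty := ⟨(a₁, b₁), hKmem _ _ hab₁ hax₁ hxb₁ hzgt⟩
  have hKcomp : IsCompact K :=
    (isCompact_Icc.prod isCompact_Icc).inter_right
      (isClosed_le continuous_const (continuous_snd.sub continuous_fst))
  -- the continuous function
  set G : ℝ → ℝ := fun t => ∫ s in (0:ℝ)..t, |f s| with hG
  have hGcont : Continuous G := intervalIntegral.continuous_primitive hint 0
  set F : ℝ × ℝ → ℝ := fun p => (G p.2 - G p.1) / (p.2 - p.1) with hF
  have hFavg : ∀ p : ℝ × ℝ, F p = mAvg f p.1 p.2 := by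
    intro p
    simp only [hF, hG, mAvg]
    rw [intervalIntegral.integral_interval_sub_left (hint 0 p.2) (hint 0 p.1)]
  have hFcont : ContinuousOn F K := by
    apply ContinuousOn.div
    · exact ((hGcont.comp continuous_snd).sub (hGcont.comp continuous_fst)).continuousOn
    · exact (continuous_snd.sub continuous_fst).continuousOn
    · rintro ⟨a, b⟩ ⟨_, hlen⟩
      simp only [mem_setOf_eq] at hlen
      exact ne_of_gt (by dsimp; linarith)
  obtain ⟨p₀, hp₀K, hp₀max⟩ := hKcomp.exists_isMaxOn hKne hFcont
  rw [isMaxOn_iff] at hp₀max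
  obtain ⟨⟨⟨haM₀, hax₀⟩, hxb₀, hbR₀⟩, hlen₀⟩ := hp₀K
  simp only [mem_setOf_eq] at hlen₀
  have hab₀ : p₀.1 < p₀.2 := by linarith
  -- the maximum value is S
  have hFS : mAvg f p₀.1 p₀.2 = S := by
    apply le_antisymm
    · rw [hSA]
      exact le_csSup hAbdd ⟨p₀.1, p₀.2, hab₀, hax₀, hxb₀, rfl⟩
    · by_contra hlt
      push_neg at hlt
      have hmax : S ≤ max (mAvg f p₀.1 p₀.2) (S - ε) := by
        rw [hSA]
        apply csSup_le hAne
        rintro z ⟨a, b, hab, hax, hxb, rfl⟩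
        rcases le_or_gt (mAvg f a b) (S - ε) with h | h
        · exact le_max_of_le_right h
        · have hmem := hKmem a b hab hax hxb h
          have h3 := hp₀max (a, b) hmem
          rw [hFavg (a, b), hFavg p₀] at h3
          exact le_max_of_le_left h3
      have h4 : max (mAvg f p₀.1 p₀.2) (S - ε) < S := max_lt hlt (by linarith)
      linarith
  refine ⟨p₀.1, p₀.2, hax₀, hxb₀, hab₀, hFS, ?_⟩
  rcases eq_or_lt_of_le hax₀ with heq | hax'
  · right
    refine ⟨heq ▸ hab₀, ?_⟩
    rw [← heq]
    exact hFS
  rcases eq_or_lt_of_le hxb₀ with heq | hxb'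
  · left
    refine ⟨heq ▸ hab₀, ?_⟩
    rw [heq]
    exact hFS
  have hLle : mAvg f p₀.1 x ≤ S := by
    rw [hSA]
    exact le_csSup hAbdd ⟨p₀.1, x, hax', hax'.le, le_rfl, rfl⟩
  have hRle : mAvg f x p₀.2 ≤ S := by
    rw [hSA]
    exact le_csSup hAbdd ⟨x, p₀.2, hxb', le_rfl, hxb'.le, rfl⟩
  by_contra hcon
  push_neg at hcon
  obtain ⟨hcl, hcr⟩ := hcon
  have h1' : mAvg f p₀.1 x < S := lt_of_le_of_ne hLle (hcl hax')
  have h2' : mAvg f x p₀.2 < S := lt_of_le_of_ne hRle (hcr hxb')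
  have hadd : (∫ t in p₀.1..x, |f t|) + (∫ t in x..p₀.2, |f t|) = ∫ t in p₀.1..p₀.2, |f t| :=
    intervalIntegral.integral_add_adjacent_intervals (hint _ _) (hint _ _)
  have e1 : (∫ t in p₀.1..x, |f t|) = mAvg f p₀.1 x * (x - p₀.1) := by
    rw [mAvg, div_mul_cancel₀]
    linarith
  have e2 : (∫ t in x..p₀.2, |f t|) = mAvg f x p₀.2 * (p₀.2 - x) := by
    rw [mAvg, div_mul_cancel₀]
    linarith
  have e3 : (∫ t in p₀.1..p₀.2, |f t|) = S * (p₀.2 - p₀.1) := by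
    rw [← hFS, mAvg, div_mul_cancel₀]
    linarith
  rw [e1, e2, e3] at hadd
  nlinarith [mul_lt_mul_of_pos_right h1' (show (0:ℝ) < x - p₀.1 by linarith),
    mul_lt_mul_of_pos_right h2' (show (0:ℝ) < p₀.2 - x by linarith)]
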